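/- (Noiseless combiner identity, Lemma 2 of the paper.) Let N be a positive integer, s ∈ ℂ^N, p ∈ ℝ^N with p_j ≥ 0 for all j, g ∈ ℂ with g ≠ 0, and let a, d ∈ ℂ^N be unit-modulus vectors. For each m ∈ {0,…,N−1} define the precoded vector x_m ∈ ℂ^N by x_m(i) = (1/√N) Σ_{j=0}^{N−1} U_j(i,m) √(p_j) s_j, and the received sample y_m = d_m · g · (Σ_{i=0}^{N−1} a_i x_m(i)). Then for every n ∈ {0,…,N−1}, the combined signal c_n = (1/g) Σ_{m=0}^{N−1} (Σ_{i=0}^{N−1} conj(a_i) conj(U_n(i,m))) · conj(d_m) · y_m satisfies c_n = √(N p_n) · s_n. -/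

import Mathlib

open Matrix Complex Finset

/-- The normalized `N × N` DFT matrix: `U i j = ω^(i*j) / √N` with `ω = exp(2πi/N)`. -/
noncomputable def dftU (N : ℕ) : Matrix (Fin N) (Fin N) ℂ :=
  fun i j => Complex.exp (2 * Real.pi * Complex.I / (N : ℂ)) ^ (i.val * j.val) / (Real.sqrt N : ℂ)

/-- The `n`-th circulant-permutation DFT (CP-DFT) matrix:
`U_n i j = U i ((j + n) mod N)`, where addition in `Fin N` is modulo `N`. -/
noncomputable def cpdft (N : ℕ) (n : Fin N) : Matrix (Fin N) (Fin N) ℂ :=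
  fun i j => dftU N i (j + n)


lemma geom_fin (N : ℕ) (z : ℂ) (hz : z ^ N = 1) :
    ∑ m : Fin N, z ^ (m : ℕ) = if z = 1 then (N : ℂ) else 0 := by
  rw [Fin.sum_univ_eq_sum_range (fun k => z ^ k)]
  by_cases h : z = 1
  · simp [h]
  · rw [if_neg h, geom_sum_eq h, hz, sub_self, zero_div]

lemma pow_mod_eq (N : ℕ) (z : ℂ) (hz : z ^ N = 1) (k : ℕ) : z ^ (k % N) = z ^ k := by
  conv_rhs => rw [← Nat.mod_add_div k N]
  rw [pow_add, pow_mul, hz, one_pow, mul_one]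

lemma ortho (N : ℕ) (hN : 0 < N) (ω : ℂ) (hprim : IsPrimitiveRoot ω N) (k l : Fin N) :
    ∑ i : Fin N, ω⁻¹ ^ (i.val * k.val) * ω ^ (i.val * l.val)
      = if l = k then (N : ℂ) else 0 := by
  have hω1 : ω ^ N = 1 := hprim.pow_eq_one
  have hωne : ω ≠ 0 := hprim.ne_zero hN.ne'
  have hz : (ω⁻¹ ^ k.val * ω ^ l.val) ^ N = 1 := by
    rw [mul_pow, ← pow_mul, ← pow_mul, mul_comm k.val N, mul_comm l.val N,
      pow_mul, pow_mul, inv_pow, hω1, inv_one, one_pow, one_pow, one_mul]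
  have h1 : ∀ i : Fin N, ω⁻¹ ^ (i.val * k.val) * ω ^ (i.val * l.val)
      = (ω⁻¹ ^ k.val * ω ^ l.val) ^ i.val := by
    intro i
    rw [mul_pow, ← pow_mul, ← pow_mul, mul_comm k.val i.val, mul_comm l.val i.val]
  rw [Finset.sum_congr rfl (fun i _ => h1 i), geom_fin N _ hz]
  have hiff : (ω⁻¹ ^ k.val * ω ^ l.val = 1) ↔ l = k := by
    constructor
    · intro h
      have : ω ^ l.val = ω ^ k.val := by
        rw [inv_pow, inv_mul_eq_one₀ (pow_ne_zero _ hωne)] at h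
        exact h.symm
      exact Fin.ext (hprim.pow_inj l.2 k.2 this)
    · intro h
      subst h
      rw [inv_pow, inv_mul_cancel₀ (pow_ne_zero _ hωne)]
  by_cases h : l = k
  · rw [if_pos (hiff.mpr h), if_pos h]
  · rw [if_neg (fun hh => h (hiff.mp hh)), if_neg h]

/-- noiseless combiner identity, Lemma 2:
with precoded vectors `x m i = (1/√N) ∑ j, U_j(i,m) √(p j) s j`, received samples
`y m = d m · g · ∑ i, a i · x m i`, and combined signals
`c n = (1/g) ∑ m (∑ i, conj (a i) conj (U_n(i,m))) conj (d m) y m`,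
one has `c n = √(N p_n) · s n` for every `n`. -/
theorem noiseless_combiner_identity (N : ℕ) (hN : 0 < N)
    (s : Fin N → ℂ) (p : Fin N → ℝ) (hp : ∀ j, 0 ≤ p j)
    (g : ℂ) (hg : g ≠ 0)
    (a d : Fin N → ℂ) (ha : ∀ i, ‖a i‖ = 1) (hd : ∀ m, ‖d m‖ = 1)
    (x : Fin N → Fin N → ℂ)
    (hx : ∀ m i, x m i =
      (1 / (Real.sqrt N : ℂ)) * ∑ j, cpdft N j i m * (Real.sqrt (p j) : ℂ) * s j)
    (y : Fin N → ℂ)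
    (hy : ∀ m, y m = d m * g * ∑ i, a i * x m i)
    (c : Fin N → ℂ)
    (hc : ∀ n, c n = (1 / g) * ∑ m,
      (∑ i, (starRingEnd ℂ) (a i) * (starRingEnd ℂ) (cpdft N n i m)) *
        (starRingEnd ℂ) (d m) * y m) :
    ∀ n, c n = (Real.sqrt ((N : ℝ) * p n) : ℂ) * s n := by
  intro n
  set ω : ℂ := Complex.exp (2 * Real.pi * Complex.I / (N : ℂ)) with hωdef
  have hprim : IsPrimitiveRoot ω N := Complex.isPrimitiveRoot_exp N hN.ne'
  have hω1 : ω ^ N = 1 := hprim.pow_eq_one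
  have hωne : ω ≠ 0 := hprim.ne_zero hN.ne'
  have hinv1 : (ω⁻¹) ^ N = 1 := by rw [inv_pow, hω1, inv_one]
  have hsqrtpos : (0:ℝ) < Real.sqrt N := Real.sqrt_pos.mpr (by exact_mod_cast hN)
  have hsqrtne : (Real.sqrt N : ℂ) ≠ 0 := by
    exact_mod_cast (ne_of_gt hsqrtpos)
  have hsq : (Real.sqrt N : ℂ) * (Real.sqrt N : ℂ) = (N : ℂ) := by
    rw [← Complex.ofReal_mul, Real.mul_self_sqrt (Nat.cast_nonneg N)]
    norm_num
  have hconj : (starRingEnd ℂ) ω = ω⁻¹ := by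
    rw [hωdef, ← Complex.exp_conj, ← Complex.exp_neg]
    congr 1
    simp only [map_div₀, _root_.map_mul, Complex.conj_I, Complex.conj_ofReal, map_ofNat,
      Complex.conj_natCast]
    ring
  -- conj of cpdft
  have hcp : ∀ (k : Fin N) (i m : Fin N),
      cpdft N k i m = ω ^ (i.val * m.val) * ω ^ (i.val * k.val) / (Real.sqrt N : ℂ) := by
    intro k i m
    have hpowN : (ω ^ i.val) ^ N = 1 := by
      rw [← pow_mul, mul_comm, pow_mul, hω1, one_pow]
    show ω ^ (i.val * ((m + k) : Fin N).val) / (Real.sqrt N : ℂ) = _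
    rw [← pow_add, ← mul_add]
    congr 1
    rw [Fin.val_add, pow_mul, pow_mul]
    exact pow_mod_eq N (ω ^ i.val) hpowN _
  have hNC : (N : ℂ) ≠ 0 := Nat.cast_ne_zero.mpr hN.ne'
  have hcpc : ∀ (i m : Fin N), (starRingEnd ℂ) (cpdft N n i m)
      = ω⁻¹ ^ (i.val * m.val) * ω⁻¹ ^ (i.val * n.val) / (Real.sqrt N : ℂ) := by
    intro i m
    rw [hcp n i m, map_div₀, _root_.map_mul, map_pow, map_pow, hconj, Complex.conj_ofReal]
  have key : ∀ i i' j : Fin N,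
      ∑ m : Fin N, (starRingEnd ℂ) (cpdft N n i m) * cpdft N j i' m
        = if i' = i then ω⁻¹ ^ (i.val * n.val) * ω ^ (i.val * j.val) else 0 := by
    intro i i' j
    have hterm : ∀ m : Fin N, (starRingEnd ℂ) (cpdft N n i m) * cpdft N j i' m
        = (ω⁻¹ ^ (m.val * i.val) * ω ^ (m.val * i'.val))
            * (ω⁻¹ ^ (i.val * n.val) * ω ^ (i'.val * j.val) / (N : ℂ)) := by
      intro m
      rw [hcpc i m, hcp j i' m, div_mul_div_comm, hsq,
        mul_comm i.val m.val, mul_comm i'.val m.val]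
      ring
    rw [Finset.sum_congr rfl (fun m _ => hterm m), ← Finset.sum_mul,
      ortho N hN ω hprim i i']
    by_cases h : i' = i
    · subst h
      rw [if_pos rfl, if_pos rfl, mul_comm, div_mul_cancel₀ _ hNC]
    · rw [if_neg h, if_neg h, zero_mul]
  have hones : ∀ z : ℂ, ‖z‖ = 1 → (starRingEnd ℂ) z * z = 1 := by
    intro z hz
    rw [mul_comm, Complex.mul_conj, Complex.normSq_eq_norm_sq, hz]
    norm_num
  have step1 : c n = ∑ m : Fin N,
      (∑ i, (starRingEnd ℂ) (a i) * (starRingEnd ℂ) (cpdft N n i m))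
        * ∑ i', a i' * x m i' := by
    rw [hc n, Finset.mul_sum]
    refine Finset.sum_congr rfl fun m _ => ?_
    rw [hy m]
    generalize (∑ i, (starRingEnd ℂ) (a i) * (starRingEnd ℂ) (cpdft N n i m)) = A
    generalize (∑ i, a i * x m i) = S
    rw [show 1 / g * (A * (starRingEnd ℂ) (d m) * (d m * g * S))
        = ((starRingEnd ℂ) (d m) * d m) * (g⁻¹ * g) * (A * S) by ring,
      hones (d m) (hd m), inv_mul_cancel₀ hg, one_mul, one_mul]
  have step2 : c n = ∑ m : Fin N, ∑ i : Fin N, ∑ i' : Fin N, ∑ j : Fin N,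
      ((starRingEnd ℂ) (a i) * a i')
        * ((1 / (Real.sqrt N : ℂ)) * ((Real.sqrt (p j) : ℂ) * s j))
        * ((starRingEnd ℂ) (cpdft N n i m) * cpdft N j i' m) := by
    rw [step1]
    refine Finset.sum_congr rfl fun m _ => ?_
    rw [Finset.sum_mul]
    refine Finset.sum_congr rfl fun i _ => ?_
    rw [Finset.mul_sum]
    refine Finset.sum_congr rfl fun i' _ => ?_
    rw [hx m i']
    simp only [Finset.mul_sum]
    refine Finset.sum_congr rfl fun j _ => ?_
    ring
  have step3 : c n = ∑ i : Fin N, ∑ j : Fin N, ∑ i' : Fin N, ∑ m : Fin N,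
      ((starRingEnd ℂ) (a i) * a i')
        * ((1 / (Real.sqrt N : ℂ)) * ((Real.sqrt (p j) : ℂ) * s j))
        * ((starRingEnd ℂ) (cpdft N n i m) * cpdft N j i' m) := by
    rw [step2, Finset.sum_comm]
    refine Finset.sum_congr rfl fun i _ => ?_
    have hA : (∑ m : Fin N, ∑ i' : Fin N, ∑ j : Fin N,
        ((starRingEnd ℂ) (a i) * a i')
          * ((1 / (Real.sqrt N : ℂ)) * ((Real.sqrt (p j) : ℂ) * s j))
          * ((starRingEnd ℂ) (cpdft N n i m) * cpdft N j i' m))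
        = ∑ i' : Fin N, ∑ j : Fin N, ∑ m : Fin N,
        ((starRingEnd ℂ) (a i) * a i')
          * ((1 / (Real.sqrt N : ℂ)) * ((Real.sqrt (p j) : ℂ) * s j))
          * ((starRingEnd ℂ) (cpdft N n i m) * cpdft N j i' m) := by
      rw [Finset.sum_comm]
      exact Finset.sum_congr rfl fun i' _ => Finset.sum_comm
    rw [hA]
    exact Finset.sum_comm
  have step4 : ∀ i j : Fin N, (∑ i' : Fin N, ∑ m : Fin N,
      ((starRingEnd ℂ) (a i) * a i')
        * ((1 / (Real.sqrt N : ℂ)) * ((Real.sqrt (p j) : ℂ) * s j))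
        * ((starRingEnd ℂ) (cpdft N n i m) * cpdft N j i' m))
      = ((1 / (Real.sqrt N : ℂ)) * ((Real.sqrt (p j) : ℂ) * s j))
          * (ω⁻¹ ^ (i.val * n.val) * ω ^ (i.val * j.val)) := by
    intro i j
    have h1 : ∀ i' : Fin N, (∑ m : Fin N,
        ((starRingEnd ℂ) (a i) * a i')
          * ((1 / (Real.sqrt N : ℂ)) * ((Real.sqrt (p j) : ℂ) * s j))
          * ((starRingEnd ℂ) (cpdft N n i m) * cpdft N j i' m))
        = if i' = i then ((starRingEnd ℂ) (a i) * a i')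
            * ((1 / (Real.sqrt N : ℂ)) * ((Real.sqrt (p j) : ℂ) * s j))
            * (ω⁻¹ ^ (i.val * n.val) * ω ^ (i.val * j.val)) else 0 := by
      intro i'
      rw [← Finset.mul_sum, key i i' j, mul_ite, mul_zero]
    rw [Finset.sum_congr rfl (fun i' _ => h1 i'), Finset.sum_ite_eq' univ i
      (fun i' => ((starRingEnd ℂ) (a i) * a i')
        * ((1 / (Real.sqrt N : ℂ)) * ((Real.sqrt (p j) : ℂ) * s j))
        * (ω⁻¹ ^ (i.val * n.val) * ω ^ (i.val * j.val))),
      if_pos (Finset.mem_univ i), hones (a i) (ha i), one_mul]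
  have step5 : c n = ∑ j : Fin N,
      ((1 / (Real.sqrt N : ℂ)) * ((Real.sqrt (p j) : ℂ) * s j))
        * (if j = n then (N : ℂ) else 0) := by
    rw [step3, Finset.sum_congr rfl (fun i (_ : i ∈ univ) =>
      Finset.sum_congr rfl (fun j _ => step4 i j)), Finset.sum_comm]
    refine Finset.sum_congr rfl fun j _ => ?_
    rw [← Finset.mul_sum, ortho N hN ω hprim n j]
  rw [step5]
  simp only [mul_ite, mul_zero]
  rw [Finset.sum_ite_eq' univ n (fun j => ((1 / (Real.sqrt N : ℂ))
    * ((Real.sqrt (p j) : ℂ) * s j)) * (N : ℂ)), if_pos (Finset.mem_univ n)]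
  rw [Real.sqrt_mul (Nat.cast_nonneg N), Complex.ofReal_mul, ← hsq]
  field_simp
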